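/- Let a₁,a₂,b,c₁,c₂ ∈ ℝ and ω the 1-form of the previous context on {x₃ > 0} ⊂ ℝ³. Then ω is a contact form (i.e., ω ∧ dω is nowhere vanishing on {x₃ > 0}) if and only if a₁c₂ ≠ a₂c₁. -/

import Mathlib

/-- Components of the dual 1-form `ω` on `{x₃ > 0} ⊂ ℝ³`. -/
noncomputable def ww1 (a₁ a₂ b c₁ x₁ x₂ x₃ : ℝ) : ℝ :=
  (1 / x₃ ^ 2) * (a₁ / 2 * (x₁ ^ 2 - x₂ ^ 2) + a₂ * x₁ * x₂ + b * x₁ + c₁) - a₁ / 2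
noncomputable def ww2 (a₁ a₂ b c₂ x₁ x₂ x₃ : ℝ) : ℝ :=
  (1 / x₃ ^ 2) * (a₂ / 2 * (x₂ ^ 2 - x₁ ^ 2) + a₁ * x₁ * x₂ + b * x₂ + c₂) - a₂ / 2
noncomputable def ww3 (a₁ a₂ b x₁ x₂ x₃ : ℝ) : ℝ := (a₁ * x₁ + a₂ * x₂ + b) / x₃

/-- The coefficient of `dx₁∧dx₂∧dx₃` in `ω ∧ dω`. -/
noncomputable def wdw (a₁ a₂ b c₁ c₂ x₁ x₂ x₃ : ℝ) : ℝ :=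
  ww1 a₁ a₂ b c₁ x₁ x₂ x₃ *
      (deriv (fun s => ww3 a₁ a₂ b x₁ s x₃) x₂ -
        deriv (fun s => ww2 a₁ a₂ b c₂ x₁ x₂ s) x₃) -
    ww2 a₁ a₂ b c₂ x₁ x₂ x₃ *
      (deriv (fun s => ww3 a₁ a₂ b s x₂ x₃) x₁ -
        deriv (fun s => ww1 a₁ a₂ b c₁ x₁ x₂ s) x₃) +
    ww3 a₁ a₂ b x₁ x₂ x₃ *
      (deriv (fun s => ww2 a₁ a₂ b c₂ s x₂ x₃) x₁ -
        deriv (fun s => ww1 a₁ a₂ b c₁ x₁ s x₃) x₂)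

-- derivative of s ↦ (1/s^2) * K + C at x₃ ≠ 0
lemma aux_inv_sq (K C : ℝ) {x₃ : ℝ} (h : x₃ ≠ 0) :
    deriv (fun s : ℝ => 1 / s ^ 2 * K + C) x₃ = -2 * K / x₃ ^ 3 := by
  have h1 : HasDerivAt (fun s : ℝ => s ^ 2) (2 * x₃) x₃ := by
    simpa using hasDerivAt_pow 2 x₃
  have h2 : HasDerivAt (fun s : ℝ => (s ^ 2)⁻¹) (-(2 * x₃) / (x₃ ^ 2) ^ 2) x₃ :=
    h1.inv (pow_ne_zero 2 h)
  have h3 : HasDerivAt (fun s : ℝ => 1 / s ^ 2 * K + C)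
      (-(2 * x₃) / (x₃ ^ 2) ^ 2 * K) x₃ := by
    simpa [one_div] using (h2.mul_const K).add_const C
  rw [h3.deriv]
  field_simp

lemma ww1_deriv3 (a₁ a₂ b c₁ x₁ x₂ : ℝ) {x₃ : ℝ} (h : x₃ ≠ 0) :
    deriv (fun s => ww1 a₁ a₂ b c₁ x₁ x₂ s) x₃ =
      -2 * (a₁ / 2 * (x₁ ^ 2 - x₂ ^ 2) + a₂ * x₁ * x₂ + b * x₁ + c₁) / x₃ ^ 3 := by
  have := aux_inv_sq (a₁ / 2 * (x₁ ^ 2 - x₂ ^ 2) + a₂ * x₁ * x₂ + b * x₁ + c₁) (-(a₁ / 2)) h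
  simpa [ww1, sub_eq_add_neg] using this

lemma ww2_deriv3 (a₁ a₂ b c₂ x₁ x₂ : ℝ) {x₃ : ℝ} (h : x₃ ≠ 0) :
    deriv (fun s => ww2 a₁ a₂ b c₂ x₁ x₂ s) x₃ =
      -2 * (a₂ / 2 * (x₂ ^ 2 - x₁ ^ 2) + a₁ * x₁ * x₂ + b * x₂ + c₂) / x₃ ^ 3 := by
  have := aux_inv_sq (a₂ / 2 * (x₂ ^ 2 - x₁ ^ 2) + a₁ * x₁ * x₂ + b * x₂ + c₂) (-(a₂ / 2)) h
  simpa [ww2, sub_eq_add_neg] using this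

lemma ww3_deriv2 (a₁ a₂ b x₁ x₂ x₃ : ℝ) :
    deriv (fun s => ww3 a₁ a₂ b x₁ s x₃) x₂ = a₂ / x₃ := by
  have h : HasDerivAt (fun s : ℝ => (a₁ * x₁ + a₂ * s + b) / x₃) (a₂ / x₃) x₂ := by
    simpa using ((((hasDerivAt_id x₂).const_mul a₂).const_add (a₁ * x₁)).add_const b).div_const x₃
  simpa [ww3] using h.deriv

lemma ww3_deriv1 (a₁ a₂ b x₁ x₂ x₃ : ℝ) :
    deriv (fun s => ww3 a₁ a₂ b s x₂ x₃) x₁ = a₁ / x₃ := by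
  have h : HasDerivAt (fun s : ℝ => (a₁ * s + a₂ * x₂ + b) / x₃) (a₁ / x₃) x₁ := by
    simpa using ((((hasDerivAt_id x₁).const_mul a₁).add_const (a₂ * x₂)).add_const b).div_const x₃
  simpa [ww3] using h.deriv

lemma ww2_deriv1 (a₁ a₂ b c₂ x₁ x₂ x₃ : ℝ) :
    deriv (fun s => ww2 a₁ a₂ b c₂ s x₂ x₃) x₁ =
      1 / x₃ ^ 2 * (-a₂ * x₁ + a₁ * x₂) := by
  have h : HasDerivAt
      (fun s : ℝ => (x₃ ^ 2)⁻¹ * (a₂ / 2 * (x₂ ^ 2 - s ^ 2) + a₁ * s * x₂ + b * x₂ + c₂) - a₂ / 2)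
      ((x₃ ^ 2)⁻¹ * (-a₂ * x₁ + a₁ * x₂)) x₁ := by
    have hs : HasDerivAt (fun s : ℝ => a₂ / 2 * (x₂ ^ 2 - s ^ 2) + a₁ * s * x₂ + b * x₂ + c₂)
        (-a₂ * x₁ + a₁ * x₂) x₁ := by
      have hp : HasDerivAt (fun s : ℝ => s ^ 2) (2 * x₁) x₁ := by simpa using hasDerivAt_pow 2 x₁
      have h1 : HasDerivAt (fun s : ℝ => a₂ / 2 * (x₂ ^ 2 - s ^ 2)) (a₂ / 2 * -(2 * x₁)) x₁ :=
        ((hp.const_sub (x₂ ^ 2)).const_mul (a₂ / 2))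
      have h2 : HasDerivAt (fun s : ℝ => a₁ * s * x₂) (a₁ * x₂) x₁ := by
        have := ((hasDerivAt_id x₁).const_mul a₁).mul_const x₂
        simpa using this
      have : HasDerivAt (fun s : ℝ => a₂ / 2 * (x₂ ^ 2 - s ^ 2) + a₁ * s * x₂ + b * x₂ + c₂)
          (a₂ / 2 * -(2 * x₁) + a₁ * x₂) x₁ := ((h1.add h2).add_const (b * x₂)).add_const c₂
      convert this using 1
      ring
    simpa using (hs.const_mul ((x₃ ^ 2)⁻¹)).sub_const (a₂ / 2)
  simpa [ww2, one_div] using h.deriv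

lemma ww1_deriv2 (a₁ a₂ b c₁ x₁ x₂ x₃ : ℝ) :
    deriv (fun s => ww1 a₁ a₂ b c₁ x₁ s x₃) x₂ =
      1 / x₃ ^ 2 * (-a₁ * x₂ + a₂ * x₁) := by
  have h : HasDerivAt
      (fun s : ℝ => (x₃ ^ 2)⁻¹ * (a₁ / 2 * (x₁ ^ 2 - s ^ 2) + a₂ * x₁ * s + b * x₁ + c₁) - a₁ / 2)
      ((x₃ ^ 2)⁻¹ * (-a₁ * x₂ + a₂ * x₁)) x₂ := by
    have hs : HasDerivAt (fun s : ℝ => a₁ / 2 * (x₁ ^ 2 - s ^ 2) + a₂ * x₁ * s + b * x₁ + c₁)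
        (-a₁ * x₂ + a₂ * x₁) x₂ := by
      have hp : HasDerivAt (fun s : ℝ => s ^ 2) (2 * x₂) x₂ := by simpa using hasDerivAt_pow 2 x₂
      have h1 : HasDerivAt (fun s : ℝ => a₁ / 2 * (x₁ ^ 2 - s ^ 2)) (a₁ / 2 * -(2 * x₂)) x₂ :=
        ((hp.const_sub (x₁ ^ 2)).const_mul (a₁ / 2))
      have h2 : HasDerivAt (fun s : ℝ => a₂ * x₁ * s) (a₂ * x₁) x₂ := by
        simpa using (hasDerivAt_id x₂).const_mul (a₂ * x₁)
      have : HasDerivAt (fun s : ℝ => a₁ / 2 * (x₁ ^ 2 - s ^ 2) + a₂ * x₁ * s + b * x₁ + c₁)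
          (a₁ / 2 * -(2 * x₂) + a₂ * x₁) x₂ := ((h1.add h2).add_const (b * x₁)).add_const c₁
      convert this using 1
      ring
    simpa using (hs.const_mul ((x₃ ^ 2)⁻¹)).sub_const (a₁ / 2)
  simpa [ww1, one_div] using h.deriv

lemma wdw_eq (a₁ a₂ b c₁ c₂ x₁ x₂ : ℝ) {x₃ : ℝ} (h : x₃ ≠ 0) :
    wdw a₁ a₂ b c₁ c₂ x₁ x₂ x₃ = 2 * (a₂ * c₁ - a₁ * c₂) / x₃ ^ 3 := by
  rw [wdw, ww1_deriv3 a₁ a₂ b c₁ x₁ x₂ h, ww2_deriv3 a₁ a₂ b c₂ x₁ x₂ h,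
    ww3_deriv2, ww3_deriv1, ww2_deriv1, ww1_deriv2, ww1, ww2, ww3]
  field_simp
  ring

/-- `ω` is a contact form on `{x₃ > 0}` (i.e. `ω ∧ dω` vanishes at no point of the
half-space) if and only if `a₁c₂ ≠ a₂c₁`. -/
theorem stmt9 (a₁ a₂ b c₁ c₂ : ℝ) :
    (∀ x₁ x₂ x₃ : ℝ, 0 < x₃ → wdw a₁ a₂ b c₁ c₂ x₁ x₂ x₃ ≠ 0) ↔ a₁ * c₂ ≠ a₂ * c₁ := by
  constructor
  · intro H heq
    have := H 0 0 1 one_pos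
    rw [wdw_eq a₁ a₂ b c₁ c₂ 0 0 one_ne_zero] at this
    apply this
    rw [heq]
    ring
  · intro hne x₁ x₂ x₃ hx₃
    rw [wdw_eq a₁ a₂ b c₁ c₂ x₁ x₂ (ne_of_gt hx₃)]
    have h1 : a₂ * c₁ - a₁ * c₂ ≠ 0 := fun h => hne (by linarith [sub_eq_zero.mp h])
    positivity
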